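/- With the same setup, if γ₁, γ₂ ∈ Δ_𝔞 are strongly orthogonal and δ ∈ Δ⁺ satisfies γ₁−δ ∈ Δ_𝔞, then γ₂−δ ∉ Δ_𝔞. -/

import Mathlib

open RealInnerProductSpace

/-- Minimal data of a crystallographic reduced root system in a real inner product space. -/
structure RootSystemData (V : Type*) [NormedAddCommGroup V] [InnerProductSpace ℝ V] where
  Δ : Set V
  finite : Δ.Finite
  nonzero : ∀ α ∈ Δ, α ≠ (0 : V)
  neg_mem : ∀ α ∈ Δ, -α ∈ Δ
  reduced : ∀ α ∈ Δ, ∀ t : ℝ, t • α ∈ Δ → t = 1 ∨ t = -1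
  crystallographic : ∀ α ∈ Δ, ∀ β ∈ Δ, ∃ n : ℤ, 2 * ⟪β, α⟫ = (n : ℝ) * ⟪α, α⟫
  reflect_mem : ∀ α ∈ Δ, ∀ β ∈ Δ, β - (2 * ⟪β, α⟫ / ⟪α, α⟫) • α ∈ Δ

variable {V : Type*} [NormedAddCommGroup V] [InnerProductSpace ℝ V]


lemma key (R : RootSystemData V) {a b : V} (ha : a ∈ R.Δ) (hb : b ∈ R.Δ)
    (hne : a ≠ b) (hpos : 0 < ⟪a, b⟫) : a - b ∈ R.Δ := by
  have ha0 := R.nonzero a ha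
  have hb0 := R.nonzero b hb
  have hna : (0:ℝ) < ‖a‖ := norm_pos_iff.2 ha0
  have hnb : (0:ℝ) < ‖b‖ := norm_pos_iff.2 hb0
  have haa : ⟪a, a⟫ = ‖a‖ * ‖a‖ := real_inner_self_eq_norm_mul_norm a
  have hbb : ⟪b, b⟫ = ‖b‖ * ‖b‖ := real_inner_self_eq_norm_mul_norm b
  have haa' : 0 < ⟪a, a⟫ := by rw [haa]; positivity
  have hbb' : 0 < ⟪b, b⟫ := by rw [hbb]; positivity
  have hcs : ⟪a, b⟫ < ‖a‖ * ‖b‖ := by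
    rw [inner_lt_norm_mul_iff_real]
    intro h
    have hb' : b = (‖b‖ / ‖a‖) • a := by
      have : ‖a‖ • ((‖b‖ / ‖a‖) • a) = ‖a‖ • b := by
        rw [smul_smul, mul_div_cancel₀ _ (ne_of_gt hna), h]
      exact (smul_right_injective V (ne_of_gt hna) this).symm
    rcases R.reduced a ha (‖b‖ / ‖a‖) (hb' ▸ hb) with h1 | h1
    · exact hne (by rw [hb', h1, one_smul])
    · have : (0:ℝ) ≤ ‖b‖ / ‖a‖ := by positivity
      rw [h1] at this; linarith
  obtain ⟨n, hn⟩ := R.crystallographic b hb a ha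
  obtain ⟨m, hm⟩ := R.crystallographic a ha b hb
  rw [real_inner_comm] at hm
  have hn1 : 1 ≤ n := by
    by_contra h
    have : (n:ℝ) ≤ 0 := by exact_mod_cast (by omega : n ≤ 0)
    nlinarith
  have hm1 : 1 ≤ m := by
    by_contra h
    have : (m:ℝ) ≤ 0 := by exact_mod_cast (by omega : m ≤ 0)
    nlinarith
  have hnm : n * m < 4 := by
    have h2 : ⟪a,b⟫ * ⟪a,b⟫ < ⟪a,a⟫ * ⟪b,b⟫ := by
      rw [haa, hbb]; nlinarith
    have h3 : ((n:ℝ) * m) * (⟪a,a⟫ * ⟪b,b⟫) < 4 * (⟪a,a⟫ * ⟪b,b⟫) := by nlinarith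
    have : ((n:ℝ) * m) < 4 := by
      have hp : 0 < ⟪a,a⟫ * ⟪b,b⟫ := by positivity
      exact lt_of_mul_lt_mul_right (by linarith) (le_of_lt hp)
    exact_mod_cast this
  have hor : n = 1 ∨ m = 1 := by
    by_contra h
    push_neg at h
    have h2n : 2 ≤ n := by omega
    have h2m : 2 ≤ m := by omega
    nlinarith
  rcases hor with h | h
  · have h' := R.reflect_mem b hb a ha
    have hq : 2 * ⟪a, b⟫ / ⟪b, b⟫ = 1 := by
      rw [hn, h, Int.cast_one]; field_simp
    rwa [hq, one_smul] at h'
  · have h' := R.reflect_mem a ha b hb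
    have hq : 2 * ⟪b, a⟫ / ⟪a, a⟫ = 1 := by
      rw [real_inner_comm, hm, h, Int.cast_one]; field_simp
    rw [hq, one_smul] at h'
    have h'' := R.neg_mem _ h'
    rwa [neg_sub] at h''

lemma key2 (R : RootSystemData V) {a b : V} (ha : a ∈ R.Δ) (hb : b ∈ R.Δ)
    (hne : a ≠ -b) (hsum : a + b ∉ R.Δ) : 0 ≤ ⟪a, b⟫ := by
  by_contra h
  push_neg at h
  have hnb : -b ∈ R.Δ := R.neg_mem b hb
  have : a - -b ∈ R.Δ := key R ha hnb hne (by rwa [inner_neg_right, lt_neg, neg_zero])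
  rw [sub_neg_eq_add] at this
  exact hsum this

/-- `P` is a positive system for the root system `R`. -/
def IsPositiveSystem (R : RootSystemData V) (P : Set V) : Prop :=
  P ⊆ R.Δ ∧ (∀ α ∈ R.Δ, α ∈ P ∨ -α ∈ P) ∧ (∀ α ∈ P, -α ∉ P) ∧
    ∀ α ∈ P, ∀ β ∈ P, α + β ∈ R.Δ → α + β ∈ P

/-- `Δa` is a combinatorial abelian ideal in the positive system `P`. -/
def IsCombinatorialAbelianIdeal (R : RootSystemData V) (P Δa : Set V) : Prop :=
  Δa ⊆ P ∧ (∀ γ ∈ Δa, ∀ μ ∈ P, γ + μ ∈ P → γ + μ ∈ Δa) ∧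
    ∀ γ₁ ∈ Δa, ∀ γ₂ ∈ Δa, γ₁ + γ₂ ∉ R.Δ

/-- Two roots are strongly orthogonal if neither their sum nor their difference is a root. -/
def StronglyOrthogonal (R : RootSystemData V) (γ₁ γ₂ : V) : Prop :=
  γ₁ ≠ γ₂ ∧ γ₁ + γ₂ ∉ R.Δ ∧ γ₁ - γ₂ ∉ R.Δ

/-- Lemma 2.2(ii): if `γ₁, γ₂` are strongly orthogonal roots of the abelian ideal `Δa` and
`γ₁ - δ ∈ Δa` for a positive root `δ`, then `γ₂ - δ ∉ Δa`. -/
theorem stmt1 (R : RootSystemData V) (P Δa : Set V)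
    (hP : IsPositiveSystem R P) (hI : IsCombinatorialAbelianIdeal R P Δa)
    {γ₁ γ₂ : V} (h1 : γ₁ ∈ Δa) (h2 : γ₂ ∈ Δa)
    (hso : StronglyOrthogonal R γ₁ γ₂)
    {δ : V} (hδ : δ ∈ P) (hdiff : γ₁ - δ ∈ Δa) :
    γ₂ - δ ∉ Δa := by
  intro hc
  obtain ⟨hPsub, hPtot, hPneg, hPadd⟩ := hP
  obtain ⟨hIsub, hIideal, hIab⟩ := hI
  obtain ⟨hne12, hsum, hdif⟩ := hso
  have memΔ : ∀ x ∈ Δa, x ∈ R.Δ := fun x hx => hPsub (hIsub hx)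
  have h1Δ := memΔ _ h1
  have h2Δ := memΔ _ h2
  have hαΔ := memΔ _ hdiff
  have hβΔ := memΔ _ hc
  have hδΔ := hPsub hδ
  have hδ0 := R.nonzero δ hδΔ
  have hδδ : 0 < ⟪δ, δ⟫ := by
    rw [real_inner_self_eq_norm_mul_norm]
    have : (0:ℝ) < ‖δ‖ := norm_pos_iff.2 hδ0
    positivity
  have neP : ∀ x ∈ P, ∀ y ∈ P, x ≠ -y := by
    intro x hx y hy hxy
    exact hPneg y hy (hxy ▸ hx)
  have hA : 0 ≤ ⟪γ₁ - δ, γ₂⟫ :=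
    key2 R hαΔ h2Δ (neP _ (hIsub hdiff) _ (hIsub h2)) (hIab _ hdiff _ h2)
  have hB : 0 ≤ ⟪γ₂ - δ, γ₁⟫ :=
    key2 R hβΔ h1Δ (neP _ (hIsub hc) _ (hIsub h1)) (hIab _ hc _ h1)
  have hC : 0 ≤ ⟪γ₁, γ₂⟫ :=
    key2 R h1Δ h2Δ (neP _ (hIsub h1) _ (hIsub h2)) hsum
  have hD : ⟪γ₁, γ₂⟫ ≤ 0 := by
    have := key2 R h1Δ (R.neg_mem _ h2Δ) (by rwa [neg_neg]) (by rwa [← sub_eq_add_neg])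
    rw [inner_neg_right] at this
    linarith
  have horth : ⟪γ₁, γ₂⟫ = 0 := le_antisymm hD hC
  have eA : ⟪γ₁ - δ, γ₂⟫ = ⟪γ₁, γ₂⟫ - ⟪δ, γ₂⟫ := by rw [inner_sub_left]
  have eB : ⟪γ₂ - δ, γ₁⟫ = ⟪γ₁, γ₂⟫ - ⟪δ, γ₁⟫ := by
    rw [inner_sub_left, real_inner_comm γ₂ γ₁]
  have eAB : ⟪γ₁ - δ, γ₂ - δ⟫ = ⟪γ₁, γ₂⟫ - ⟪γ₁, δ⟫ - ⟪δ, γ₂⟫ + ⟪δ, δ⟫ := by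
    rw [inner_sub_left, inner_sub_right, inner_sub_right]; ring
  have hpos : 0 < ⟪γ₁ - δ, γ₂ - δ⟫ := by
    rw [eAB, horth]
    rw [eA, horth] at hA
    rw [eB, horth] at hB
    have : ⟪γ₁, δ⟫ = ⟪δ, γ₁⟫ := real_inner_comm _ _
    linarith
  have hneαβ : γ₁ - δ ≠ γ₂ - δ := fun h => hne12 (by
    have := congrArg (· + δ) h
    simpa using this)
  have := key R hαΔ hβΔ hneαβ hpos
  rw [sub_sub_sub_cancel_right] at this
  exact hdif this
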